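/- Let a, b, c be positive integers satisfying the strict triangle inequalities, let N₁ = −a+b+c, N₂ = a−b+c, N₃ = a+b−c, N = a+b+c, d = gcd(N₁, N₂, N₃), and assume condition (6): gcd((N₁/d)·(N₂/d)·(N₃/d), N/d) = 1. If either (i) a, b, c are all odd, or (ii) exactly two of a, b, c are even and one is odd, or (iii) N₁, N₂, N₃ are all divisible by exactly the same highest power of 2 (their 2-adic valuations are equal), then the area A of the triangle with sides a, b, c is not a rational number. -/

import Mathlib

/-- Heron's formula: the area of a triangle with side lengths `a`, `b`, `c`. -/
noncomputable def heronArea (a b c : ℕ) : ℝ :=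
  Real.sqrt (((a + b + c : ℝ) / 2) * ((a + b + c : ℝ) / 2 - a) *
    ((a + b + c : ℝ) / 2 - b) * ((a + b + c : ℝ) / 2 - c))


-- cast of odd nat into ZMod 4
lemma aux_cast (m : ℕ) (hm : Odd m) : (m : ZMod 4) = 1 ∨ (m : ZMod 4) = 3 := by
  have h4 : ((m % 4 : ℕ) : ZMod 4) = (m : ZMod 4) := ZMod.natCast_mod m 4 ▸ rfl
  have : m % 4 = 1 ∨ m % 4 = 3 := by
    obtain ⟨k, rfl⟩ := hm; omega
  rcases this with h | h <;> [left; right] <;>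
    rw [← ZMod.natCast_mod m 4, h] <;> rfl

-- main number-theoretic core
lemma aux_core (m1 m2 m3 : ℕ) (h1 : Odd m1) (h2 : Odd m2) (h3 : Odd m3)
    (hcop : Nat.Coprime (m1*m2*m3) (m1+m2+m3)) :
    ¬ IsSquare (m1*m2*m3*(m1+m2+m3)) := by
  intro hsq
  obtain ⟨r, hr⟩ := hsq
  have hs1 : IsSquare (m1*m2*m3) := by
    obtain ⟨t, ht⟩ := exists_eq_pow_of_mul_eq_pow (α := ℕ)
      (a := m1*m2*m3) (b := m1+m2+m3) (c := r) (k := 2)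
      (by rw [Nat.isUnit_iff]; exact hcop) (by rw [hr, sq])
    exact ⟨t, by rw [ht, sq]⟩
  have hs2 : IsSquare (m1+m2+m3) := by
    obtain ⟨t, ht⟩ := exists_eq_pow_of_mul_eq_pow (α := ℕ)
      (a := m1+m2+m3) (b := m1*m2*m3) (c := r) (k := 2)
      (by rw [Nat.isUnit_iff]; rw [Nat.Coprime, Nat.gcd_comm] at hcop; exact hcop) (by rw [mul_comm, hr, sq])
    exact ⟨t, by rw [ht, sq]⟩
  have key : ∀ x y z : ZMod 4, (x = 1 ∨ x = 3) → (y = 1 ∨ y = 3) → (z = 1 ∨ z = 3) →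
      IsSquare (x*y*z) → IsSquare (x+y+z) → False := by decide
  have c1 := hs1.map (Nat.castRingHom (ZMod 4)).toMonoidHom
  have c2 := hs2.map (Nat.castRingHom (ZMod 4)).toMonoidHom
  simp only [RingHom.toMonoidHom_eq_coe, MonoidHom.coe_coe, Nat.coe_castRingHom,
    Nat.cast_mul, Nat.cast_add] at c1 c2
  exact key _ _ _ (aux_cast m1 h1) (aux_cast m2 h2) (aux_cast m3 h3) c1 c2

-- odd quotient lemma
lemma aux_odd_div (x dd v : ℕ) (hx : x ≠ 0) (hdvd : dd ∣ x) (hdd : 2^v ∣ dd)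
    (hvx : padicValNat 2 x = v) : Odd (x / dd) := by
  have hd0 : dd ≠ 0 := by rintro rfl; exact hx (Nat.eq_zero_of_zero_dvd hdvd)
  obtain ⟨m, rfl⟩ := hdvd
  rw [Nat.mul_div_cancel_left _ (Nat.pos_of_ne_zero hd0)]
  rw [← Nat.not_even_iff_odd, even_iff_two_dvd]
  intro h2m
  have : 2^(v+1) ∣ dd * m := by
    rw [pow_succ]; exact mul_dvd_mul hdd h2m
  have hle := (Nat.Prime.pow_dvd_iff_le_factorization Nat.prime_two hx).mp this
  rw [Nat.factorization_def _ Nat.prime_two, hvx] at hle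
  omega


lemma aux_heron (a b c : ℕ) (h1 : a < b + c) (h2 : b < a + c) (h3 : c < a + b) :
    heronArea a b c =
      Real.sqrt (((b + c - a) * (a + c - b) * (a + b - c) * (a + b + c) : ℕ)) / 4 := by
  have e1 : ((b + c - a : ℕ) : ℝ) = (b : ℝ) + c - a := by
    push_cast [Nat.cast_sub h1.le]; ring
  have e2 : ((a + c - b : ℕ) : ℝ) = (a : ℝ) + c - b := by
    push_cast [Nat.cast_sub h2.le]; ring
  have e3 : ((a + b - c : ℕ) : ℝ) = (a : ℝ) + b - c := by
    push_cast [Nat.cast_sub h3.le]; ring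
  rw [heronArea]
  have : (((b + c - a) * (a + c - b) * (a + b - c) * (a + b + c) : ℕ) : ℝ)
      = ((b:ℝ) + c - a) * ((a:ℝ) + c - b) * ((a:ℝ) + b - c) * ((a:ℝ) + b + c) := by
    push_cast [e1, e2, e3]; ring
  rw [show ((a:ℝ) + b + c) / 2 * (((a:ℝ) + b + c) / 2 - a) * (((a:ℝ) + b + c) / 2 - b) *
      (((a:ℝ) + b + c) / 2 - c) = (((b + c - a) * (a + c - b) * (a + b - c) * (a + b + c) : ℕ) : ℝ)
      / 16 by rw [this]; ring]
  rw [Real.sqrt_div (Nat.cast_nonneg _) 16,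
    show Real.sqrt 16 = 4 by
      rw [show (16:ℝ) = 4^2 by norm_num, Real.sqrt_sq (by norm_num : (0:ℝ) ≤ 4)]]

lemma aux_val0 (n : ℕ) (h : Odd n) : padicValNat 2 n = 0 :=
  padicValNat.eq_zero_of_not_dvd (by rw [Nat.odd_iff] at h; omega)

lemma aux_cancel (dd X r : ℕ) (hd : dd ≠ 0) (h : dd^4 * X = r * r) : IsSquare X := by
  have hdvd : dd^2 ∣ r := by
    rw [← Nat.pow_dvd_pow_iff (two_ne_zero)]
    exact ⟨X, by rw [show r^2 = r*r from sq r, ← h]; ring⟩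
  obtain ⟨t, rfl⟩ := hdvd
  refine ⟨t, ?_⟩
  have h4 : dd^4 ≠ 0 := pow_ne_zero _ hd
  apply Nat.eq_of_mul_eq_mul_left (Nat.pos_of_ne_zero h4)
  rw [h]; ring

theorem stmt_4 (a b c : ℕ) (ha : 0 < a) (hb : 0 < b) (hc : 0 < c)
    (h1 : a < b + c) (h2 : b < a + c) (h3 : c < a + b)
    (d : ℕ) (hd : d = Nat.gcd (b + c - a) (Nat.gcd (a + c - b) (a + b - c)))
    (h6 : Nat.gcd (((b + c - a) / d) * ((a + c - b) / d) * ((a + b - c) / d))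
      ((a + b + c) / d) = 1)
    (hcase :
      (Odd a ∧ Odd b ∧ Odd c) ∨
      ((Even a ∧ Even b ∧ Odd c) ∨ (Even a ∧ Odd b ∧ Even c) ∨
        (Odd a ∧ Even b ∧ Even c)) ∨
      (padicValNat 2 (b + c - a) = padicValNat 2 (a + c - b) ∧
        padicValNat 2 (a + c - b) = padicValNat 2 (a + b - c))) :
    ¬ ∃ q : ℚ, heronArea a b c = (q : ℝ) := by
  rintro ⟨q, hq⟩
  rw [aux_heron a b c h1 h2 h3] at hq
  -- the radicand
  set P : ℕ := (b + c - a) * (a + c - b) * (a + b - c) * (a + b + c) with hP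
  have hnotirr : ¬ Irrational (Real.sqrt (P : ℕ)) := by
    refine not_not_intro ⟨4 * q, ?_⟩
    push_cast
    linarith [hq]
  have hPsq : IsSquare P := by
    by_contra h
    exact hnotirr (irrational_sqrt_natCast_iff.mpr h)
  -- notation
  set n1 := b + c - a with hn1
  set n2 := a + c - b with hn2
  set n3 := a + b - c with hn3
  have hn1pos : 0 < n1 := by omega
  have hn2pos : 0 < n2 := by omega
  have hn3pos : 0 < n3 := by omega
  have hdn1 : d ∣ n1 := hd ▸ Nat.gcd_dvd_left _ _
  have hdn2 : d ∣ n2 := hd ▸ (Nat.gcd_dvd_right _ _).trans (Nat.gcd_dvd_left _ _)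
  have hdn3 : d ∣ n3 := hd ▸ ((Nat.gcd_dvd_right _ _).trans (Nat.gcd_dvd_right _ _))
  have hdpos : 0 < d := hd ▸ Nat.gcd_pos_of_pos_left _ hn1pos
  -- common 2-adic valuation
  have hv : padicValNat 2 n1 = padicValNat 2 n2 ∧ padicValNat 2 n2 = padicValNat 2 n3 := by
    rcases hcase with ⟨ha', hb', hc'⟩ | (h' | h' | h') | h'
    · rw [Nat.odd_iff] at ha' hb' hc'
      have o1 : Odd n1 := by rw [Nat.odd_iff]; omega
      have o2 : Odd n2 := by rw [Nat.odd_iff]; omega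
      have o3 : Odd n3 := by rw [Nat.odd_iff]; omega
      rw [aux_val0 _ o1, aux_val0 _ o2, aux_val0 _ o3]; exact ⟨rfl, rfl⟩
    all_goals try {
      obtain ⟨ha', hb', hc'⟩ := h'
      first
      | (rw [Nat.even_iff] at ha' hb'; rw [Nat.odd_iff] at hc')
      | (rw [Nat.even_iff] at ha' hc'; rw [Nat.odd_iff] at hb')
      | (rw [Nat.even_iff] at hb' hc'; rw [Nat.odd_iff] at ha')
      have o1 : Odd n1 := by rw [Nat.odd_iff]; omega
      have o2 : Odd n2 := by rw [Nat.odd_iff]; omega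
      have o3 : Odd n3 := by rw [Nat.odd_iff]; omega
      rw [aux_val0 _ o1, aux_val0 _ o2, aux_val0 _ o3]; exact ⟨rfl, rfl⟩ }
    exact h'
  have h2d : 2 ^ padicValNat 2 n1 ∣ d := by
    rw [hd]
    refine Nat.dvd_gcd pow_padicValNat_dvd (Nat.dvd_gcd ?_ ?_)
    · rw [hv.1]; exact pow_padicValNat_dvd
    · rw [hv.1, hv.2]; exact pow_padicValNat_dvd
  -- odd quotients
  have om1 : Odd (n1 / d) := aux_odd_div n1 d _ hn1pos.ne' hdn1 h2d rfl
  have om2 : Odd (n2 / d) := aux_odd_div n2 d _ hn2pos.ne' hdn2 h2d (hv.1).symm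
  have om3 : Odd (n3 / d) := aux_odd_div n3 d _ hn3pos.ne' hdn3 h2d (hv.1.trans hv.2).symm
  set m1 := n1 / d
  set m2 := n2 / d
  set m3 := n3 / d
  have hm1 : n1 = d * m1 := (Nat.mul_div_cancel' hdn1).symm
  have hm2 : n2 = d * m2 := (Nat.mul_div_cancel' hdn2).symm
  have hm3 : n3 = d * m3 := (Nat.mul_div_cancel' hdn3).symm
  have hsumn : a + b + c = n1 + n2 + n3 := by omega
  have hsum : (a + b + c) / d = m1 + m2 + m3 := by
    rw [hsumn, hm1, hm2, hm3, ← Nat.mul_add, ← Nat.mul_add, Nat.mul_div_cancel_left _ hdpos]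
  have hcop : Nat.Coprime (m1 * m2 * m3) (m1 + m2 + m3) := by
    rw [Nat.Coprime, ← hsum]; exact h6
  have hPeq : P = d ^ 4 * (m1 * m2 * m3 * (m1 + m2 + m3)) := by
    rw [hP, hsumn, hm1, hm2, hm3]; ring
  obtain ⟨r, hr⟩ := hPsq
  rw [hPeq] at hr
  exact aux_core m1 m2 m3 om1 om2 om3 hcop (aux_cancel d _ r hdpos.ne' hr)
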